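/- Let a and b be coprime integers with a ≠ 0. Then there exists an integer x such that a·x + b ≠ 0 and 8 does not divide φ(a·x + b). -/

import Mathlib

private lemma cop4 (c : ℤ) (h : c % 4 = 3) : IsCoprime c 4 := ⟨-1, c/4+1, by omega⟩

private lemma copCong (b c A : ℤ) (h : IsCoprime b A) (hd : A ∣ c - b) : IsCoprime c A := by
  obtain ⟨u, v, huv⟩ := h
  obtain ⟨t, ht⟩ := hd
  exact ⟨u, v - u*t, by linear_combination huv + u*ht⟩

private lemma unitOf (M : ℕ) (c : ℤ) (h : IsCoprime c (M:ℤ)) : IsUnit ((c : ZMod M)) := by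
  obtain ⟨u, v, huv⟩ := h
  have h1 : ((u*c + v*(M:ℤ) : ℤ) : ZMod M) = 1 := by rw [huv]; simp
  push_cast at h1
  simp [ZMod.natCast_self] at h1
  exact IsUnit.of_mul_eq_one _ (mul_comm (u : ZMod M) _ ▸ h1)

private lemma build (a b : ℤ) (n : ℕ) (hn : n ≠ 0) (h : (a.natAbs : ℤ) ∣ (n:ℤ) - b)
    (h8 : ¬ 8 ∣ n.totient) :
    ∃ x : ℤ, a * x + b ≠ 0 ∧ ¬ (8 ∣ Nat.totient (a * x + b).natAbs) := by
  obtain ⟨x, hx⟩ := Int.natAbs_dvd.mp h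
  refine ⟨x, ?_, ?_⟩
  · intro h0
    have : (n:ℤ) = 0 := by linarith [h0, hx]
    exact hn (by exact_mod_cast this)
  · have he : a * x + b = (n:ℤ) := by linarith [hx]
    rw [he, Int.natAbs_natCast]
    exact h8

private lemma onePrime (a b c : ℤ) (ha : a ≠ 0) (hc4 : c % 4 = 3)
    (hcb : (a.natAbs : ℤ) ∣ c - b) (hcu : IsCoprime c (4 * a.natAbs)) :
    ∃ x : ℤ, a * x + b ≠ 0 ∧ ¬ (8 ∣ Nat.totient (a * x + b).natAbs) := by
  set A := a.natAbs with hA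
  have hA0 : A ≠ 0 := Int.natAbs_ne_zero.mpr ha
  haveI : NeZero (4 * A) := ⟨by omega⟩
  have hcu' : IsCoprime c ((4 * A : ℕ) : ℤ) := by push_cast; exact hcu
  obtain ⟨p, hp2, hpp, hpc⟩ :=
    Nat.forall_exists_prime_gt_and_eq_mod (q := 4 * A) (unitOf _ c hcu') 2
  have hpc' : ((p : ℤ) : ZMod (4 * A)) = (c : ZMod (4 * A)) := by
    rw [← hpc]; push_cast; ring
  have hdvd : ((4 * A : ℕ) : ℤ) ∣ c - (p : ℤ) :=
    (ZMod.intCast_eq_intCast_iff_dvd_sub _ _ _).mp hpc'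
  have hdvd' : (4 * (A:ℤ)) ∣ c - (p:ℤ) := by push_cast at hdvd; exact hdvd
  have hAb : (A : ℤ) ∣ (p : ℤ) - b := by
    have h1 : (A:ℤ) ∣ c - (p:ℤ) := dvd_trans ⟨4, by ring⟩ hdvd'
    have := dvd_sub hcb h1
    simpa using this
  have h4 : (4:ℤ) ∣ c - (p:ℤ) := dvd_trans ⟨(A:ℤ), by ring⟩ hdvd'
  have hp4 : p % 4 = 3 := by omega
  refine build a b p hpp.pos.ne' hAb ?_
  rw [Nat.totient_prime hpp]
  omega

private lemma twoPrimes (a b : ℤ) (ha : a ≠ 0) (h4 : 4 ∣ a.natAbs) (hb4 : b % 4 = 1)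
    (hcb : IsCoprime b (a.natAbs : ℤ)) :
    ∃ x : ℤ, a * x + b ≠ 0 ∧ ¬ (8 ∣ Nat.totient (a * x + b).natAbs) := by
  set A := a.natAbs with hA
  have hA0 : A ≠ 0 := Int.natAbs_ne_zero.mpr ha
  haveI : NeZero A := ⟨hA0⟩
  have hu1 : IsUnit ((-1 : ℤ) : ZMod A) := unitOf A (-1) ⟨-1, 0, by ring⟩
  have hu2 : IsUnit ((-b : ℤ) : ZMod A) := by
    refine unitOf A (-b) ?_
    obtain ⟨u, v, huv⟩ := hcb
    exact ⟨-u, v, by linear_combination huv⟩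
  obtain ⟨p, hp2, hpp, hpc⟩ := Nat.forall_exists_prime_gt_and_eq_mod (q := A) hu1 2
  obtain ⟨q, hqp, hqq, hqc⟩ := Nat.forall_exists_prime_gt_and_eq_mod (q := A) hu2 (max p 2)
  have hqp' : p < q := lt_of_le_of_lt (le_max_left p 2) hqp
  have hq2 : 2 < q := lt_of_le_of_lt (le_max_right p 2) hqp
  have hdp : ((A:ℕ) : ℤ) ∣ (-1 : ℤ) - (p : ℤ) := by
    rw [← ZMod.intCast_eq_intCast_iff_dvd_sub]
    rw [← hpc]; push_cast; ring
  have hdq : ((A:ℕ) : ℤ) ∣ (-b : ℤ) - (q : ℤ) := by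
    rw [← ZMod.intCast_eq_intCast_iff_dvd_sub]
    rw [← hqc]; push_cast; ring
  have hAb : (A : ℤ) ∣ ((p*q : ℕ) : ℤ) - b := by
    have : ((p*q : ℕ) : ℤ) - b = -(q:ℤ) * ((-1:ℤ) - (p:ℤ)) + ((-b:ℤ) - (q:ℤ)) := by
      push_cast; ring
    rw [this]
    exact dvd_add (Dvd.dvd.mul_left hdp _) hdq
  have h4A : (4:ℤ) ∣ (A:ℤ) := by exact_mod_cast Int.natCast_dvd_natCast.mpr h4
  have hp4 : p % 4 = 3 := by have := dvd_trans h4A hdp; omega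
  have hq4 : q % 4 = 3 := by have := dvd_trans h4A hdq; omega
  refine build a b (p*q) (by positivity) hAb ?_
  have hcop : Nat.Coprime p q := (Nat.coprime_primes hpp hqq).mpr hqp'.ne
  rw [Nat.totient_mul hcop, Nat.totient_prime hpp, Nat.totient_prime hqq]
  obtain ⟨k, hk⟩ : ∃ k, p = 4*k+3 := ⟨p/4, by omega⟩
  obtain ⟨l, hl⟩ : ∃ l, q = 4*l+3 := ⟨q/4, by omega⟩
  have he : (p-1)*(q-1) = 4*((2*k+1)*(2*l+1)) := by
    rw [show p - 1 = 2*(2*k+1) by omega, show q - 1 = 2*(2*l+1) by omega]; ring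
  rw [he]
  intro h8
  have h2 : 2 ∣ (2*k+1)*(2*l+1) := by omega
  rcases (Nat.Prime.dvd_mul Nat.prime_two).mp h2 with h | h <;> omega

theorem stmt2 (a b : ℤ) (ha : a ≠ 0) (hab : IsCoprime a b) :
    ∃ x : ℤ, a * x + b ≠ 0 ∧ ¬ (8 ∣ Nat.totient (a * x + b).natAbs) := by
  set A := a.natAbs with hA
  have hA0 : A ≠ 0 := Int.natAbs_ne_zero.mpr ha
  have hcopA : IsCoprime ((A:ℕ):ℤ) b := by
    rcases Int.natAbs_eq a with h | h
    · rwa [← h]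
    · rw [h] at hab
      exact (IsCoprime.neg_left_iff _ _).mp hab
  by_cases hb3 : b % 4 = 3
  · exact onePrime a b b ha hb3 (by simp) ((cop4 b hb3).mul_right hcopA.symm)
  · by_cases h2 : 2 ∣ A
    · -- b is odd
      have hbodd : ¬ (2:ℤ) ∣ b := by
        intro hb
        obtain ⟨u, v, huv⟩ := hcopA
        obtain ⟨s, hs⟩ : (2:ℤ) ∣ (A:ℤ) := by exact_mod_cast Int.natCast_dvd_natCast.mpr h2
        obtain ⟨t, ht⟩ := hb
        have : 2 * (u*s + v*t) = 1 := by linear_combination huv - u*hs - v*ht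
        omega
      have hb1 : b % 4 = 1 := by omega
      by_cases h4 : 4 ∣ A
      · exact twoPrimes a b ha h4 hb1 hcopA.symm
      · -- A % 4 = 2, use c = b + A
        have hc4 : (b + (A:ℤ)) % 4 = 3 := by
          have hA2 : A % 4 = 2 := by omega
          omega
        have hd : (A:ℤ) ∣ (b + (A:ℤ)) - b := ⟨1, by ring⟩
        exact onePrime a b (b + A) ha hc4 ⟨1, by ring⟩
          ((cop4 _ hc4).mul_right (copCong b _ _ hcopA.symm hd))
    · -- A odd: Bezout with 4
      obtain ⟨u, v, huv⟩ : IsCoprime ((A:ℕ):ℤ) 4 := by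
        by_cases h1 : (A:ℤ) % 4 = 1
        · exact ⟨1, -((A:ℤ)/4), by omega⟩
        · exact ⟨-1, ((A:ℤ)+1)/4, by omega⟩
      set c : ℤ := 3*u*(A:ℤ) + 4*v*b with hc
      have hd : (A:ℤ) ∣ c - b := ⟨u*(3-b), by linear_combination b*huv⟩
      have hc4 : c % 4 = 3 := by
        have : c = 4*(v*(b-3)) + 3 := by linear_combination 3*huv
        omega
      exact onePrime a b c ha hc4 hd
        ((cop4 c hc4).mul_right (copCong b c _ hcopA.symm hd))
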